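/- Let G be a group, K a subgroup of G, C a subgroup of K, and φ : C → K a group monomorphism. Let L = K∗_φ be the HNN extension of K along φ, with stable letter t, and regard K as a subgroup of both G and L. Then there is an isomorphism between the HNN extension G∗_φ = ⟨G, t | tct⁻¹ = φ(c) for all c ∈ C⟩ and the amalgamated product G ∗_K L (amalgamated over K via the inclusions K ≤ G and K ≤ L) which restricts to the identity on G and sends the stable letter of G∗_φ to the stable letter of L. -/

import Mathlib

open Monoid

/-! ### The amalgamated product of two groups -/

/-- The amalgamated product `G₁ ∗_C G₂` determined by `G₁ ←f₁− C −f₂→ G₂`: the quotient of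
the free product `G₁ ∗ G₂` by the normal closure of the elements `f₁ c · (f₂ c)⁻¹`. -/
abbrev Amal {C G₁ G₂ : Type*} [Group C] [Group G₁] [Group G₂]
    (f₁ : C →* G₁) (f₂ : C →* G₂) : Type _ :=
  Coprod G₁ G₂ ⧸ Subgroup.normalClosure
    {x : Coprod G₁ G₂ | ∃ c : C, x = Coprod.inl (f₁ c) * (Coprod.inr (f₂ c))⁻¹}

/-- The canonical homomorphism `G₁ →* G₁ ∗_C G₂`. -/
def Amal.inl {C G₁ G₂ : Type*} [Group C] [Group G₁] [Group G₂]
    (f₁ : C →* G₁) (f₂ : C →* G₂) : G₁ →* Amal f₁ f₂ :=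
  (QuotientGroup.mk' _).comp Coprod.inl

/-- The canonical homomorphism `G₂ →* G₁ ∗_C G₂`. -/
def Amal.inr {C G₁ G₂ : Type*} [Group C] [Group G₁] [Group G₂]
    (f₁ : C →* G₁) (f₂ : C →* G₂) : G₂ →* Amal f₁ f₂ :=
  (QuotientGroup.mk' _).comp Coprod.inr

/-- In the amalgamated product, the two images of an element of the amalgamated subgroup agree. -/
theorem Amal.inl_eq_inr {C G₁ G₂ : Type*} [Group C] [Group G₁] [Group G₂]
    (f₁ : C →* G₁) (f₂ : C →* G₂) (c : C) :
    Amal.inl f₁ f₂ (f₁ c) = Amal.inr f₁ f₂ (f₂ c) := by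
  have h : Coprod.inl (f₁ c) * (Coprod.inr (f₂ c))⁻¹ ∈
      Subgroup.normalClosure
        {x : Coprod G₁ G₂ | ∃ c : C, x = Coprod.inl (f₁ c) * (Coprod.inr (f₂ c))⁻¹} :=
    Subgroup.subset_normalClosure ⟨c, rfl⟩
  simp only [Amal.inl, Amal.inr, MonoidHom.comp_apply, QuotientGroup.mk'_apply]
  rw [QuotientGroup.eq]
  have h2 := Subgroup.normalClosure_normal.conj_mem _
    ((Subgroup.normalClosure _).inv_mem h) (Coprod.inl (f₁ c))⁻¹
  convert h2 using 1
  group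

/-- Let `K ≤ G`, `C ≤ K` and let `φ : C → K` be a monomorphism.  Let
`L = K∗_φ` be the HNN extension of `K` along `φ` with stable letter `t`.  Then there is an
isomorphism between the HNN extension `G∗_φ = ⟨G, t ∣ t c t⁻¹ = φ(c)⟩` and the amalgamated
product `G ∗_K L` (amalgamated over `K` via the inclusions `K ≤ G` and `K ≤ L`) which
restricts to the identity on `G` and sends the stable letter of `G∗_φ` to the stable
letter of `L`. -/
theorem hnn_iso_amalgam_of_hnn_of_subgroup
    {G : Type*} [Group G] (K C : Subgroup G) (hCK : C ≤ K)
    (φ : ↥C →* G) (hφ : Function.Injective φ) (hφK : φ.range ≤ K)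
    -- `φ'` is `φ` viewed as a map from `C`, regarded as a subgroup of `K`, to `K`:
    (φ' : ↥(C.subgroupOf K) →* ↥K)
    (hφ' : ∀ c : ↥(C.subgroupOf K), (φ' c : G) = φ ((Subgroup.subgroupOfEquivOfLe hCK) c))
    (hφ'inj : Function.Injective φ') :
    ∃ e : HNNExtension G C φ.range (MonoidHom.ofInjective hφ) ≃*
      Amal K.subtype
        (HNNExtension.of :
          ↥K →* HNNExtension ↥K (C.subgroupOf K) φ'.range (MonoidHom.ofInjective hφ'inj)),
      (∀ g : G, e (HNNExtension.of g) =
        Amal.inl K.subtype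
          (HNNExtension.of :
            ↥K →* HNNExtension ↥K (C.subgroupOf K) φ'.range (MonoidHom.ofInjective hφ'inj)) g) ∧
      e HNNExtension.t =
        Amal.inr K.subtype
          (HNNExtension.of :
            ↥K →* HNNExtension ↥K (C.subgroupOf K) φ'.range (MonoidHom.ofInjective hφ'inj))
          HNNExtension.t := by
  -- Abbreviations (kept as plain `have`-free notation to not block `simp`)
  -- L : the HNN extension of K, ofL : K →* L is `HNNExtension.of`.
  -- Forward map on generators.
  have hx : ∀ a : ↥C,
      Amal.inr K.subtype
        (HNNExtension.of :
          ↥K →* HNNExtension ↥K (C.subgroupOf K) φ'.range (MonoidHom.ofInjective hφ'inj))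
        HNNExtension.t *
        Amal.inl K.subtype (HNNExtension.of : ↥K →* HNNExtension ↥K (C.subgroupOf K) φ'.range (MonoidHom.ofInjective hφ'inj)) (a : G) =
      Amal.inl K.subtype (HNNExtension.of : ↥K →* HNNExtension ↥K (C.subgroupOf K) φ'.range (MonoidHom.ofInjective hφ'inj)) ((MonoidHom.ofInjective hφ a : φ.range) : G) *
        Amal.inr K.subtype (HNNExtension.of : ↥K →* HNNExtension ↥K (C.subgroupOf K) φ'.range (MonoidHom.ofInjective hφ'inj)) HNNExtension.t := by
    intro a
    set a' : ↥(C.subgroupOf K) := ⟨⟨(a : G), hCK a.2⟩, a.2⟩ with ha'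
    have key : (HNNExtension.t :
          HNNExtension ↥K (C.subgroupOf K) φ'.range (MonoidHom.ofInjective hφ'inj)) *
          HNNExtension.of (⟨(a : G), hCK a.2⟩ : ↥K) =
        HNNExtension.of ((MonoidHom.ofInjective hφ'inj a' : φ'.range) : ↥K) * HNNExtension.t :=
      HNNExtension.t_mul_of a'
    have hval : ((MonoidHom.ofInjective hφ'inj a' : φ'.range) : ↥K) = φ' a' := rfl
    have hval2 : ((φ' a' : ↥K) : G) = φ a := by
      rw [hφ' a']
      congr 1
    have h1 : Amal.inl K.subtype (HNNExtension.of : ↥K →* HNNExtension ↥K (C.subgroupOf K) φ'.range (MonoidHom.ofInjective hφ'inj)) (a : G) =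
        Amal.inr K.subtype (HNNExtension.of : ↥K →* HNNExtension ↥K (C.subgroupOf K) φ'.range (MonoidHom.ofInjective hφ'inj)) ((HNNExtension.of : ↥K →* HNNExtension ↥K (C.subgroupOf K) φ'.range (MonoidHom.ofInjective hφ'inj)) (⟨(a : G), hCK a.2⟩ : ↥K)) :=
      Amal.inl_eq_inr K.subtype (HNNExtension.of : ↥K →* HNNExtension ↥K (C.subgroupOf K) φ'.range (MonoidHom.ofInjective hφ'inj)) (⟨(a : G), hCK a.2⟩ : ↥K)
    have h2 : Amal.inl K.subtype (HNNExtension.of : ↥K →* HNNExtension ↥K (C.subgroupOf K) φ'.range (MonoidHom.ofInjective hφ'inj))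
          ((MonoidHom.ofInjective hφ a : φ.range) : G) =
        Amal.inr K.subtype (HNNExtension.of : ↥K →* HNNExtension ↥K (C.subgroupOf K) φ'.range (MonoidHom.ofInjective hφ'inj)) ((HNNExtension.of : ↥K →* HNNExtension ↥K (C.subgroupOf K) φ'.range (MonoidHom.ofInjective hφ'inj)) (φ' a')) := by
      have h3 := Amal.inl_eq_inr K.subtype
        (HNNExtension.of :
          ↥K →* HNNExtension ↥K (C.subgroupOf K) φ'.range (MonoidHom.ofInjective hφ'inj))
        (φ' a')
      rw [← h3]
      congr 1
      rw [MonoidHom.ofInjective_apply]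
      exact hval2.symm
    rw [h1, h2, ← map_mul, ← map_mul, key, hval]
  -- the forward map
  set F : HNNExtension G C φ.range (MonoidHom.ofInjective hφ) →*
      Amal K.subtype
        (HNNExtension.of :
          ↥K →* HNNExtension ↥K (C.subgroupOf K) φ'.range (MonoidHom.ofInjective hφ'inj)) :=
    HNNExtension.lift (Amal.inl K.subtype (HNNExtension.of : ↥K →* HNNExtension ↥K (C.subgroupOf K) φ'.range (MonoidHom.ofInjective hφ'inj)))
      (Amal.inr K.subtype (HNNExtension.of : ↥K →* HNNExtension ↥K (C.subgroupOf K) φ'.range (MonoidHom.ofInjective hφ'inj)) HNNExtension.t) hx with hF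
  -- the map L →* H1
  have hψx : ∀ a : ↥(C.subgroupOf K),
      (HNNExtension.t : HNNExtension G C φ.range (MonoidHom.ofInjective hφ)) *
        (HNNExtension.of.comp K.subtype) ((a : ↥K)) =
      (HNNExtension.of.comp K.subtype)
        ((MonoidHom.ofInjective hφ'inj a : φ'.range) : ↥K) * HNNExtension.t := by
    intro a
    set a₀ : ↥C := ⟨((a : ↥K) : G), a.2⟩ with ha₀
    have key : (HNNExtension.t : HNNExtension G C φ.range (MonoidHom.ofInjective hφ)) *
        HNNExtension.of (a₀ : G) =
        HNNExtension.of ((MonoidHom.ofInjective hφ a₀ : φ.range) : G) * HNNExtension.t :=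
      HNNExtension.t_mul_of a₀
    simp only [MonoidHom.comp_apply, Subgroup.coe_subtype]
    rw [show (((MonoidHom.ofInjective hφ'inj a : φ'.range) : ↥K) : G) = φ a₀ by
      show ((φ' a : ↥K) : G) = φ a₀
      rw [hφ' a]
      congr 1]
    rw [← MonoidHom.ofInjective_apply hφ]
    exact key
  set ψ : HNNExtension ↥K (C.subgroupOf K) φ'.range (MonoidHom.ofInjective hφ'inj) →*
      HNNExtension G C φ.range (MonoidHom.ofInjective hφ) :=
    HNNExtension.lift (HNNExtension.of.comp K.subtype) HNNExtension.t hψx with hψ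
  -- The backward map
  have hker : Subgroup.normalClosure
      {x : Coprod G (HNNExtension ↥K (C.subgroupOf K) φ'.range (MonoidHom.ofInjective hφ'inj)) |
        ∃ c : ↥K, x = Coprod.inl (K.subtype c) * (Coprod.inr (HNNExtension.of c))⁻¹} ≤
      (Coprod.lift (HNNExtension.of : G →* HNNExtension G C φ.range (MonoidHom.ofInjective hφ))
        ψ).ker := by
    apply Subgroup.normalClosure_le_normal
    rintro x ⟨c, rfl⟩
    simp [MonoidHom.mem_ker, hψ]
  set B : Amal K.subtype
      (HNNExtension.of :
        ↥K →* HNNExtension ↥K (C.subgroupOf K) φ'.range (MonoidHom.ofInjective hφ'inj)) →*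
      HNNExtension G C φ.range (MonoidHom.ofInjective hφ) :=
    QuotientGroup.lift _
      (Coprod.lift (HNNExtension.of : G →* HNNExtension G C φ.range (MonoidHom.ofInjective hφ)) ψ)
      hker with hB
  have hBF : B.comp F = MonoidHom.id _ := by
    apply HNNExtension.hom_ext
    · ext g
      simp only [hF, hB, MonoidHom.comp_apply, MonoidHom.id_apply, HNNExtension.lift_of,
        Amal.inl, QuotientGroup.mk'_apply, QuotientGroup.lift_mk, Coprod.lift_apply_inl]
    · simp only [hF, hB, MonoidHom.comp_apply, MonoidHom.id_apply, HNNExtension.lift_t,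
        Amal.inr, QuotientGroup.mk'_apply, QuotientGroup.lift_mk, Coprod.lift_apply_inr,
        hψ]
  have hFB : F.comp B = MonoidHom.id _ := by
    apply QuotientGroup.monoidHom_ext
    apply Coprod.hom_ext
    · ext g
      show F (B (Amal.inl K.subtype (HNNExtension.of : ↥K →* HNNExtension ↥K (C.subgroupOf K) φ'.range (MonoidHom.ofInjective hφ'inj)) g)) = Amal.inl K.subtype (HNNExtension.of : ↥K →* HNNExtension ↥K (C.subgroupOf K) φ'.range (MonoidHom.ofInjective hφ'inj)) g
      rw [hB]
      simp only [Amal.inl, MonoidHom.comp_apply, QuotientGroup.mk'_apply, QuotientGroup.lift_mk,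
        Coprod.lift_apply_inl]
      rw [hF]
      simp only [HNNExtension.lift_of]
      rfl
    · refine HNNExtension.hom_ext ?_ ?_
      · ext k
        show F (B (Amal.inr K.subtype (HNNExtension.of : ↥K →* HNNExtension ↥K (C.subgroupOf K) φ'.range (MonoidHom.ofInjective hφ'inj)) ((HNNExtension.of : ↥K →* HNNExtension ↥K (C.subgroupOf K) φ'.range (MonoidHom.ofInjective hφ'inj)) k))) =
          Amal.inr K.subtype (HNNExtension.of : ↥K →* HNNExtension ↥K (C.subgroupOf K) φ'.range (MonoidHom.ofInjective hφ'inj)) ((HNNExtension.of : ↥K →* HNNExtension ↥K (C.subgroupOf K) φ'.range (MonoidHom.ofInjective hφ'inj)) k)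
        rw [hB]
        simp only [Amal.inr, MonoidHom.comp_apply, QuotientGroup.mk'_apply, QuotientGroup.lift_mk,
          Coprod.lift_apply_inr]
        rw [hψ]
        simp only [HNNExtension.lift_of, MonoidHom.comp_apply, Subgroup.coe_subtype]
        rw [hF]
        simp only [HNNExtension.lift_of]
        exact Amal.inl_eq_inr K.subtype (HNNExtension.of : ↥K →* HNNExtension ↥K (C.subgroupOf K) φ'.range (MonoidHom.ofInjective hφ'inj)) k
      · show F (B (Amal.inr K.subtype (HNNExtension.of : ↥K →* HNNExtension ↥K (C.subgroupOf K) φ'.range (MonoidHom.ofInjective hφ'inj)) HNNExtension.t)) =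
          Amal.inr K.subtype (HNNExtension.of : ↥K →* HNNExtension ↥K (C.subgroupOf K) φ'.range (MonoidHom.ofInjective hφ'inj)) HNNExtension.t
        rw [hB]
        simp only [Amal.inr, MonoidHom.comp_apply, QuotientGroup.mk'_apply, QuotientGroup.lift_mk,
          Coprod.lift_apply_inr]
        rw [hψ]
        simp only [HNNExtension.lift_t]
        rw [hF]
        simp only [HNNExtension.lift_t]
        rfl
  refine ⟨F.toMulEquiv B hBF hFB, ?_, ?_⟩
  · intro g
    show F (HNNExtension.of g) = _
    rw [hF]
    exact HNNExtension.lift_of _ _ hx g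
  · show F HNNExtension.t = _
    rw [hF]
    exact HNNExtension.lift_t _ _ hx
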